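/- arXiv:math/0405588 — 6 statements merged into one kernel-verified Lean document; each statement's English description precedes it below -/
import Mathlib

section
/- For b ∈ (0,1) and t ∈ [0,1], the partial derivative with respect to b of ∫₀¹ b/√(b⁴s⁴+1+2b²s²cos ρ) ds equals ∫₀¹ (1−b⁴s⁴)/(b⁴s⁴+1+2b²s²cos ρ)^{3/2} ds, which is strictly positive. -/
open Real MeasureTheory intervalIntegral Set

private lemma Q_lower (c : ℝ) (hc : -1 < c) (x t : ℝ) :
    min (1/4) (1+c) ≤ x^4*t^4 + 1 + 2*x^2*t^2*c := by
  have hu0 : (0:ℝ) ≤ x^2*t^2 := by positivity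
  have h1c : (0:ℝ) < 1 + c := by linarith
  rcases le_or_gt (x^2*t^2) (1/2) with h | h
  · have := min_le_left (1/4 : ℝ) (1+c)
    nlinarith [sq_nonneg (1 - x^2*t^2), mul_nonneg hu0 h1c.le]
  · have := min_le_right (1/4 : ℝ) (1+c)
    nlinarith [sq_nonneg (1 - x^2*t^2), mul_nonneg hu0 h1c.le]

private lemma Q_pos (c : ℝ) (hc : -1 < c) (x t : ℝ) :
    0 < x^4*t^4 + 1 + 2*x^2*t^2*c :=
  lt_of_lt_of_le (lt_min (by norm_num) (by linarith)) (Q_lower c hc x t)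

private lemma alg_identity (c t x q r : ℝ) (hr : 0 < r) (hr2 : r^2 = q)
    (hX : x^4*t^4 + 1 + 2*x^2*t^2*c = q) :
    (1 - x^4*t^4) / (q * r)
      = (1 * r - id x * ((4*x^3*t^4 + 4*x*t^2*c)/(2*r))) / r^2 := by
  subst hr2
  rw [id]
  field_simp
  linear_combination 2 * hX

private lemma key_deriv (c t x : ℝ) (hc : -1 < c) :
    HasDerivAt (fun x : ℝ => x / Real.sqrt (x^4*t^4 + 1 + 2*x^2*t^2*c))
      ((1 - x^4*t^4) / (x^4*t^4 + 1 + 2*x^2*t^2*c) ^ ((3:ℝ)/2)) x := by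
  have hq : 0 < x^4*t^4 + 1 + 2*x^2*t^2*c := Q_pos c hc x t
  have hr : 0 < Real.sqrt (x^4*t^4 + 1 + 2*x^2*t^2*c) := Real.sqrt_pos.2 hq
  have h1 : HasDerivAt (fun x : ℝ => x^4*t^4 + 1 + 2*x^2*t^2*c)
      (4*x^3*t^4 + 4*x*t^2*c) x := by
    have h := (((hasDerivAt_pow 4 x).mul_const (t^4)).add_const 1).add
      (((hasDerivAt_pow 2 x).mul_const (t^2*c)).const_mul 2)
    have heq : (fun x : ℝ => x^4*t^4 + 1 + 2*x^2*t^2*c)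
        = fun x : ℝ => (x^4*t^4 + 1) + 2*(x^2*(t^2*c)) := by funext y; ring
    rw [heq]
    refine h.congr_deriv (Eq.symm ?_); push_cast; ring
  have hsq := h1.sqrt hq.ne'
  have hdiv := (hasDerivAt_id x).div hsq hr.ne'
  refine hdiv.congr_deriv (Eq.symm ?_)
  have hr2 : Real.sqrt (x^4*t^4 + 1 + 2*x^2*t^2*c) ^ 2 = x^4*t^4 + 1 + 2*x^2*t^2*c :=
    Real.sq_sqrt hq.le
  have h32 : (x^4*t^4 + 1 + 2*x^2*t^2*c) ^ ((3:ℝ)/2)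
      = (x^4*t^4 + 1 + 2*x^2*t^2*c) * Real.sqrt (x^4*t^4 + 1 + 2*x^2*t^2*c) := by
    rw [show (3:ℝ)/2 = 1 + 1/2 by norm_num, Real.rpow_add hq, Real.rpow_one,
      Real.sqrt_eq_rpow]
  rw [h32]
  exact alg_identity c t x _ _ hr hr2 rfl

/-- derivative in b of the rescaled integral, and its positivity. -/
theorem stmt1 (ρ b : ℝ) (hρ : ρ ∈ Set.Ioo (0:ℝ) Real.pi) (hb : b ∈ Set.Ioo (0:ℝ) 1) :
    HasDerivAt (fun x : ℝ => ∫ s in (0:ℝ)..1, x / Real.sqrt (x^4*s^4 + 1 + 2*x^2*s^2*Real.cos ρ))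
      (∫ s in (0:ℝ)..1, (1 - b^4*s^4) / (b^4*s^4 + 1 + 2*b^2*s^2*Real.cos ρ) ^ ((3:ℝ)/2)) b ∧
    0 < ∫ s in (0:ℝ)..1, (1 - b^4*s^4) / (b^4*s^4 + 1 + 2*b^2*s^2*Real.cos ρ) ^ ((3:ℝ)/2) := by
  set c := Real.cos ρ with hcdef
  have hc : -1 < c := by
    have := Real.cos_lt_cos_of_nonneg_of_le_pi (le_of_lt hρ.1) le_rfl hρ.2
    rwa [Real.cos_pi] at this
  have hm : (0:ℝ) < min (1/4) (1+c) := lt_min (by norm_num) (by linarith)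
  -- continuity of the derivative integrand (for any y)
  have hcont' : ∀ y : ℝ, Continuous (fun s : ℝ =>
      (1 - y^4*s^4) / (y^4*s^4 + 1 + 2*y^2*s^2*c) ^ ((3:ℝ)/2)) := by
    intro y
    apply Continuous.div (by continuity)
    · exact (by continuity : Continuous fun s : ℝ => y^4*s^4 + 1 + 2*y^2*s^2*c).rpow_const
        fun s => Or.inr (by norm_num)
    · exact fun s => (Real.rpow_pos_of_pos (Q_pos c hc y s) _).ne'
  have hcontF : ∀ y : ℝ, Continuous (fun s : ℝ =>
      y / Real.sqrt (y^4*s^4 + 1 + 2*y^2*s^2*c)) := by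
    intro y
    apply Continuous.div continuous_const
      ((by continuity : Continuous fun s : ℝ => y^4*s^4 + 1 + 2*y^2*s^2*c).sqrt)
    exact fun s => (Real.sqrt_pos.2 (Q_pos c hc y s)).ne'
  have hderiv :
      HasDerivAt (fun x : ℝ => ∫ s in (0:ℝ)..1, x / Real.sqrt (x^4*s^4 + 1 + 2*x^2*s^2*c))
        (∫ s in (0:ℝ)..1, (1 - b^4*s^4) / (b^4*s^4 + 1 + 2*b^2*s^2*c) ^ ((3:ℝ)/2)) b := by
    have := (intervalIntegral.hasDerivAt_integral_of_dominated_loc_of_deriv_le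
      (F := fun x s => x / Real.sqrt (x^4*s^4 + 1 + 2*x^2*s^2*c))
      (F' := fun x s => (1 - x^4*s^4) / (x^4*s^4 + 1 + 2*x^2*s^2*c) ^ ((3:ℝ)/2))
      (bound := fun _ => 17 / (min (1/4) (1+c)) ^ ((3:ℝ)/2))
      (μ := volume) (a := (0:ℝ)) (b := (1:ℝ)) (x₀ := b)
      (Metric.ball_mem_nhds b one_pos)
      (Filter.Eventually.of_forall fun y => ((hcontF y).aestronglyMeasurable))
      ((hcontF b).intervalIntegrable 0 1)
      ((hcont' b).aestronglyMeasurable)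
      ?_ (intervalIntegrable_const) ?_)
    · exact this.2
    · refine Filter.Eventually.of_forall fun t ht x hx => ?_
      rw [Set.uIoc_of_le (by norm_num : (0:ℝ) ≤ 1)] at ht
      have hq := Q_pos c hc x t
      have hql := Q_lower c hc x t
      have hxb : |x - b| < 1 := by simpa [Real.dist_eq] using hx
      have hx2 : x^2 < 4 := by
        rcases abs_lt.1 hxb with ⟨h1, h2⟩
        nlinarith [hb.1, hb.2]
      have ht4 : t^4 ≤ 1 := by exact pow_le_one₀ ht.1.le ht.2
      have hx4 : x^4 ≤ 16 := by nlinarith [sq_nonneg x]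
      have hx40 : (0:ℝ) ≤ x^4 := by positivity
      have hxt : x^4*t^4 ≤ 16 := le_trans (mul_le_of_le_one_right hx40 ht4) hx4
      have hxt0 : 0 ≤ x^4*t^4 := by positivity
      have hnum : |1 - x^4*t^4| ≤ 17 := abs_le.2 ⟨by linarith, by linarith⟩
      have hpow : (min (1/4) (1+c)) ^ ((3:ℝ)/2)
          ≤ (x^4*t^4 + 1 + 2*x^2*t^2*c) ^ ((3:ℝ)/2) :=
        Real.rpow_le_rpow hm.le hql (by norm_num)
      have hmp : 0 < (min (1/4) (1+c)) ^ ((3:ℝ)/2) := Real.rpow_pos_of_pos hm _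
      rw [Real.norm_eq_abs, abs_div, abs_of_pos (Real.rpow_pos_of_pos hq _)]
      exact div_le_div₀ (by norm_num) hnum hmp hpow
    · exact Filter.Eventually.of_forall fun t _ x _ => key_deriv c t x hc
  have hpos : 0 < ∫ s in (0:ℝ)..1,
      (1 - b^4*s^4) / (b^4*s^4 + 1 + 2*b^2*s^2*c) ^ ((3:ℝ)/2) := by
    apply intervalIntegral.intervalIntegral_pos_of_pos_on
      ((hcont' b).intervalIntegrable 0 1)
    · intro s hs
      have hq := Q_pos c hc b s
      have hb4 : b^4 < 1 := pow_lt_one₀ hb.1.le hb.2 (by norm_num)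
      have hs4 : s^4 ≤ 1 := by exact pow_le_one₀ hs.1.le hs.2.le
      have : b^4*s^4 < 1 := by nlinarith [pow_nonneg hs.1.le 4, pow_nonneg hb.1.le 4]
      exact div_pos (by linarith) (Real.rpow_pos_of_pos hq _)
    · norm_num
  exact ⟨hderiv, hpos⟩
end

section
/- For all x ≥ 0, tanh(x) ≤ x, and consequently for a ∈ (0,1) and β ∈ (0,1], the function f₁(β) = 2β/sinh(2β·artanh a) − (1−a²)/a satisfies f₁'(β) ≤ 0; since f₁(1) = 0, one has f₁(β) ≥ 0 for all β ∈ (0,1], i.e. β(1−b²)/b ≥ (1−a²)/a where b = tanh(β artanh a). -/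
open Real Set

/-- Inverse hyperbolic tangent. -/
noncomputable def artanh (x : ℝ) : ℝ := Real.log ((1 + x) / (1 - x)) / 2

lemma my_g_deriv (y : ℝ) : HasDerivAt (fun z : ℝ => z * Real.cosh z - Real.sinh z)
    (1 * Real.cosh y + y * Real.sinh y - Real.cosh y) y :=
  ((hasDerivAt_id y).mul (Real.hasDerivAt_cosh y)).sub (Real.hasDerivAt_sinh y)

lemma my_sinh_le_mul_cosh {x : ℝ} (hx : 0 ≤ x) : Real.sinh x ≤ x * Real.cosh x := by
  have hmono : MonotoneOn (fun z : ℝ => z * Real.cosh z - Real.sinh z) (Set.Ici 0) := by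
    apply monotoneOn_of_deriv_nonneg (convex_Ici 0)
    · fun_prop
    · exact fun y _ => (my_g_deriv y).differentiableAt.differentiableWithinAt
    · intro y hy
      rw [(my_g_deriv y).deriv]
      rw [interior_Ici, Set.mem_Ioi] at hy
      nlinarith [Real.sinh_pos_iff.2 hy]
  have := hmono (Set.self_mem_Ici) (Set.mem_Ici.2 hx) hx
  simp only [Real.sinh_zero, Real.cosh_zero, zero_mul, sub_zero] at this
  linarith

lemma my_tanh_le {x : ℝ} (hx : 0 ≤ x) : Real.tanh x ≤ x := by
  rw [Real.tanh_eq_sinh_div_cosh, div_le_iff₀ (Real.cosh_pos x)]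
  exact my_sinh_le_mul_cosh hx

/-- tanh x ≤ x for x ≥ 0, f₁' ≤ 0, f₁(1)=0, f₁ ≥ 0, and the key inequality. -/
theorem stmt6 (a : ℝ) (ha : a ∈ Set.Ioo (0:ℝ) 1)
    (f₁ : ℝ → ℝ)
    (hf₁ : ∀ β, f₁ β = 2*β / Real.sinh (2*β*_root_.artanh a) - (1 - a^2)/a) :
    (∀ x : ℝ, 0 ≤ x → Real.tanh x ≤ x) ∧
    (∀ β ∈ Set.Ioc (0:ℝ) 1, deriv f₁ β ≤ 0) ∧
    f₁ 1 = 0 ∧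
    (∀ β ∈ Set.Ioc (0:ℝ) 1, 0 ≤ f₁ β) ∧
    (∀ β ∈ Set.Ioc (0:ℝ) 1,
      (1 - a^2)/a ≤ β * (1 - (Real.tanh (β*_root_.artanh a))^2) / Real.tanh (β*_root_.artanh a)) := by
  obtain ⟨ha0, ha1⟩ := ha
  have ha1' : (1:ℝ) - a ≠ 0 := by linarith
  have ha1'' : (1:ℝ) + a ≠ 0 := by linarith
  have hasq : (1:ℝ) - a^2 ≠ 0 := by nlinarith
  set t := _root_.artanh a with htdef
  have ht : 0 < t := by
    have h1 : (1:ℝ) < (1 + a) / (1 - a) := by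
      rw [lt_div_iff₀ (by linarith)]; linarith
    have := Real.log_pos h1
    rw [htdef]; unfold _root_.artanh; linarith
  have hfe : f₁ = fun x => 2*x / Real.sinh (2*x*t) - (1 - a^2)/a := funext hf₁
  have hderiv : ∀ β : ℝ, 0 < β → HasDerivAt f₁
      ((2 * Real.sinh (2*β*t) - 2*β * (2*t*Real.cosh (2*β*t))) / (Real.sinh (2*β*t))^2) β := by
    intro β hβ
    have hs : 0 < Real.sinh (2*β*t) := Real.sinh_pos_iff.2 (by positivity)
    have hnum : HasDerivAt (fun β : ℝ => 2*β) 2 β := by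
      simpa using (hasDerivAt_id β).const_mul 2
    have harg : HasDerivAt (fun β : ℝ => 2*β*t) (2*t) β := by
      have h0 : HasDerivAt (fun β : ℝ => 2*t*β) (2*t) β := by
        simpa using (hasDerivAt_id β).const_mul (2*t)
      simpa [mul_comm, mul_assoc, mul_left_comm] using h0
    have hden : HasDerivAt (fun β : ℝ => Real.sinh (2*β*t)) (2*t*Real.cosh (2*β*t)) β := by
      simpa [mul_comm, Function.comp_def] using (Real.hasDerivAt_sinh (2*β*t)).comp β harg
    rw [hfe]
    exact (hnum.div hden hs.ne').sub_const _
  have hderiv_le : ∀ β : ℝ, 0 < β → deriv f₁ β ≤ 0 := by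
    intro β hβ
    rw [(hderiv β hβ).deriv]
    have hs : 0 < Real.sinh (2*β*t) := Real.sinh_pos_iff.2 (by positivity)
    apply div_nonpos_of_nonpos_of_nonneg _ (sq_nonneg _)
    have := my_sinh_le_mul_cosh (x := 2*β*t) (by positivity)
    nlinarith
  have hsinh2t : Real.sinh (2*t) = 2*a/(1-a^2) := by
    have hr : (0:ℝ) < (1 + a) / (1 - a) := div_pos (by linarith) (by linarith)
    have h2t : 2*t = Real.log ((1 + a) / (1 - a)) := by
      rw [htdef]; unfold _root_.artanh; ring
    rw [Real.sinh_eq, h2t, ← Real.log_inv, Real.exp_log hr, Real.exp_log (inv_pos.2 hr)]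
    rw [inv_div]
    field_simp
    ring
  have hf1 : f₁ 1 = 0 := by
    rw [hf₁ 1, show (2:ℝ)*1*t = 2*t by ring, hsinh2t]
    have h2a : (2:ℝ)*a/(1-a^2) ≠ 0 := by
      apply div_ne_zero (by linarith) hasq
    field_simp
    ring
  have hanti : AntitoneOn f₁ (Set.Ioi 0) := by
    apply antitoneOn_of_deriv_nonpos (convex_Ioi 0)
    · intro x hx
      exact (hderiv x hx).continuousAt.continuousWithinAt
    · intro x hx
      rw [interior_Ioi] at hx
      exact (hderiv x hx).differentiableAt.differentiableWithinAt
    · intro x hx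
      rw [interior_Ioi] at hx
      exact hderiv_le x hx
  have hnonneg : ∀ β ∈ Set.Ioc (0:ℝ) 1, 0 ≤ f₁ β := by
    intro β ⟨hβ0, hβ1⟩
    have := hanti (Set.mem_Ioi.2 hβ0) (Set.mem_Ioi.2 one_pos) hβ1
    linarith [hf1 ▸ this]
  refine ⟨fun x hx => my_tanh_le hx, fun β hβ => hderiv_le β hβ.1, hf1, hnonneg, ?_⟩
  intro β hβ
  have hβ0 := hβ.1
  have hy : 0 < β * t := by positivity
  have hs : 0 < Real.sinh (β*t) := Real.sinh_pos_iff.2 hy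
  have hc : 0 < Real.cosh (β*t) := Real.cosh_pos (β*t)
  have hident : β * (1 - (Real.tanh (β*t))^2) / Real.tanh (β*t) = 2*β / Real.sinh (2*β*t) := by
    rw [show 2*β*t = 2*(β*t) by ring, Real.sinh_two_mul, Real.tanh_eq_sinh_div_cosh]
    have h1 := Real.cosh_sq_sub_sinh_sq (β*t)
    field_simp
    nlinarith
  rw [hident]
  have := hnonneg β hβ
  rw [hf₁ β] at this
  linarith
end

section
/- The function H₃(x) = x² cos(πx/2)/sin³(πx/2) is decreasing on (0,1]: its derivative equals (x/2)·csc⁴(πx/2)·(2 sin(πx) − πx(2+cos(πx))), which is ≤ 0 on (0,1]. -/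
open Real Set

lemma stmt8_g_hasDeriv (t : ℝ) :
    HasDerivAt (fun t => Real.cos t + t * Real.sin t) (t * Real.cos t) t := by
  have h := (Real.hasDerivAt_cos t).add ((hasDerivAt_id t).mul (Real.hasDerivAt_sin t))
  refine h.congr_deriv ?_
  simp only [id_eq]; ring

lemma stmt8_g_le (t : ℝ) (ht : t ∈ Set.Icc 0 Real.pi) :
    Real.cos t + t * Real.sin t ≤ 2 := by
  set g : ℝ → ℝ := fun t => Real.cos t + t * Real.sin t with hg
  have hdiff : ∀ s, DifferentiableAt ℝ g s := fun s => (stmt8_g_hasDeriv s).differentiableAt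
  have hderiv : ∀ s, deriv g s = s * Real.cos s := fun s => (stmt8_g_hasDeriv s).deriv
  have hcont : Continuous g := Real.continuous_cos.add (continuous_id.mul Real.continuous_sin)
  have hval : g (Real.pi/2) = Real.pi/2 := by simp [hg]
  have hhalf : g (Real.pi/2) ≤ 2 := by
    rw [hval]; nlinarith [Real.pi_lt_d2]
  rcases le_or_gt t (Real.pi/2) with h | h
  · have hmono : MonotoneOn g (Set.Icc 0 (Real.pi/2)) := by
      apply monotoneOn_of_deriv_nonneg (convex_Icc _ _) hcont.continuousOn
        (fun s _ => (hdiff s).differentiableWithinAt)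
      intro s hs
      rw [interior_Icc] at hs
      rw [hderiv]
      have := Real.cos_nonneg_of_mem_Icc ⟨by linarith [hs.1, Real.pi_pos], le_of_lt hs.2⟩
      exact mul_nonneg (le_of_lt hs.1) this
    calc g t ≤ g (Real.pi/2) := hmono ⟨ht.1, h⟩ ⟨by positivity, le_refl _⟩ h
      _ ≤ 2 := hhalf
  · have hanti : AntitoneOn g (Set.Icc (Real.pi/2) Real.pi) := by
      apply antitoneOn_of_deriv_nonpos (convex_Icc _ _) hcont.continuousOn
        (fun s _ => (hdiff s).differentiableWithinAt)
      intro s hs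
      rw [interior_Icc] at hs
      rw [hderiv]
      have := Real.cos_nonpos_of_pi_div_two_le_of_le (le_of_lt hs.1)
        (by linarith [hs.2, Real.pi_pos])
      have hs0 : 0 ≤ s := by linarith [Real.pi_pos, hs.1]
      exact mul_nonpos_of_nonneg_of_nonpos hs0 this
    calc g t ≤ g (Real.pi/2) :=
        hanti ⟨le_refl _, by linarith [Real.pi_pos]⟩ ⟨le_of_lt h, ht.2⟩ (le_of_lt h)
      _ ≤ 2 := hhalf

lemma stmt8_f_hasDeriv (x : ℝ) :
    HasDerivAt (fun x => 2 * Real.sin (Real.pi*x) - Real.pi*x*(2 + Real.cos (Real.pi*x)))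
      (Real.pi * (Real.cos (Real.pi*x) + (Real.pi*x) * Real.sin (Real.pi*x) - 2)) x := by
  have hx : HasDerivAt (fun x : ℝ => Real.pi*x) Real.pi x := by
    simpa using (hasDerivAt_id x).const_mul Real.pi
  have hsin : HasDerivAt (fun x => Real.sin (Real.pi*x)) (Real.cos (Real.pi*x) * Real.pi) x :=
    (Real.hasDerivAt_sin _).comp x hx
  have hcos : HasDerivAt (fun x => Real.cos (Real.pi*x)) (-Real.sin (Real.pi*x) * Real.pi) x :=
    (Real.hasDerivAt_cos _).comp x hx
  have h := (hsin.const_mul 2).sub (hx.mul ((hasDerivAt_const x (2:ℝ)).add hcos))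
  refine h.congr_deriv ?_
  simp only [Pi.add_apply]
  ring

lemma stmt8_f_nonpos (x : ℝ) (hx : x ∈ Set.Icc (0:ℝ) 1) :
    2 * Real.sin (Real.pi*x) - Real.pi*x*(2 + Real.cos (Real.pi*x)) ≤ 0 := by
  set f : ℝ → ℝ := fun x => 2 * Real.sin (Real.pi*x) - Real.pi*x*(2 + Real.cos (Real.pi*x))
    with hf
  have hanti : AntitoneOn f (Set.Icc 0 1) := by
    apply antitoneOn_of_deriv_nonpos (convex_Icc _ _)
      (Continuous.continuousOn (by fun_prop))
      (fun s _ => (stmt8_f_hasDeriv s).differentiableAt.differentiableWithinAt)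
    intro s hs
    rw [interior_Icc] at hs
    rw [(stmt8_f_hasDeriv s).deriv]
    have hmem : Real.pi * s ∈ Set.Icc 0 Real.pi := by
      constructor
      · exact mul_nonneg Real.pi_pos.le hs.1.le
      · nlinarith [Real.pi_pos, hs.2]
    have := stmt8_g_le _ hmem
    nlinarith [Real.pi_pos]
  have h0 : f 0 = 0 := by simp [hf]
  calc f x ≤ f 0 := hanti ⟨le_refl _, by norm_num⟩ hx hx.1
    _ = 0 := h0

lemma stmt8_H3_hasDeriv (x : ℝ) (hs : Real.sin (Real.pi*x/2) ≠ 0) :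
    HasDerivAt (fun x => x^2 * Real.cos (Real.pi*x/2) / (Real.sin (Real.pi*x/2))^3)
      ((x/2) * ((Real.sin (Real.pi*x/2))⁻¹)^4 *
        (2 * Real.sin (Real.pi*x) - Real.pi*x*(2 + Real.cos (Real.pi*x)))) x := by
  have hu : HasDerivAt (fun x : ℝ => Real.pi*x/2) (Real.pi/2) x := by
    simpa using ((hasDerivAt_id x).const_mul Real.pi).div_const 2
  have hsin : HasDerivAt (fun x => Real.sin (Real.pi*x/2))
      (Real.cos (Real.pi*x/2) * (Real.pi/2)) x := (Real.hasDerivAt_sin _).comp x hu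
  have hcos : HasDerivAt (fun x => Real.cos (Real.pi*x/2))
      (-Real.sin (Real.pi*x/2) * (Real.pi/2)) x := (Real.hasDerivAt_cos _).comp x hu
  have hnum := (hasDerivAt_pow 2 x).mul hcos
  have hden := hsin.pow 3
  have hne : (Real.sin (Real.pi*x/2))^3 ≠ 0 := pow_ne_zero _ hs
  have h := hnum.div hden hne
  refine h.congr_deriv ?_
  simp only [Pi.mul_apply, Pi.pow_apply]
  have h2 : Real.pi * x = 2 * (Real.pi*x/2) := by ring
  rw [h2, Real.sin_two_mul, Real.cos_two_mul]
  have hsq : Real.sin (Real.pi*x/2)^2 = 1 - Real.cos (Real.pi*x/2)^2 := by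
    nlinarith [Real.sin_sq_add_cos_sq (Real.pi*x/2)]
  field_simp
  linear_combination (-(Real.pi*x^2*Real.sin (Real.pi*x/2)^2)) * hsq

/-- H₃(x) = x² cos(πx/2)/sin³(πx/2) is decreasing on (0,1] with the stated derivative. -/
theorem stmt8 (H₃ : ℝ → ℝ)
    (hH₃ : ∀ x, H₃ x = x^2 * Real.cos (Real.pi*x/2) / (Real.sin (Real.pi*x/2))^3) :
    AntitoneOn H₃ (Set.Ioc (0:ℝ) 1) ∧
    ∀ x ∈ Set.Ioc (0:ℝ) 1,
      deriv H₃ x = (x/2) * ((Real.sin (Real.pi*x/2))⁻¹)^4 *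
        (2 * Real.sin (Real.pi*x) - Real.pi*x*(2 + Real.cos (Real.pi*x))) ∧
      deriv H₃ x ≤ 0 := by
  have hfun : H₃ = fun x => x^2 * Real.cos (Real.pi*x/2) / (Real.sin (Real.pi*x/2))^3 :=
    funext hH₃
  have hsinpos : ∀ x ∈ Set.Ioc (0:ℝ) 1, 0 < Real.sin (Real.pi*x/2) := by
    intro x hx
    apply Real.sin_pos_of_pos_of_lt_pi
    · have := Real.pi_pos; nlinarith [hx.1]
    · have := Real.pi_pos; nlinarith [hx.2]
  have hHD : ∀ x ∈ Set.Ioc (0:ℝ) 1,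
      HasDerivAt H₃ ((x/2) * ((Real.sin (Real.pi*x/2))⁻¹)^4 *
        (2 * Real.sin (Real.pi*x) - Real.pi*x*(2 + Real.cos (Real.pi*x)))) x := by
    intro x hx
    rw [hfun]
    exact stmt8_H3_hasDeriv x (ne_of_gt (hsinpos x hx))
  have hDnonpos : ∀ x ∈ Set.Ioc (0:ℝ) 1,
      (x/2) * ((Real.sin (Real.pi*x/2))⁻¹)^4 *
        (2 * Real.sin (Real.pi*x) - Real.pi*x*(2 + Real.cos (Real.pi*x))) ≤ 0 := by
    intro x hx
    have h1 : (0:ℝ) ≤ (x/2) * ((Real.sin (Real.pi*x/2))⁻¹)^4 := by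
      have := hx.1
      positivity
    have h2 := stmt8_f_nonpos x ⟨hx.1.le, hx.2⟩
    exact mul_nonpos_of_nonneg_of_nonpos h1 h2
  constructor
  · apply antitoneOn_of_deriv_nonpos (convex_Ioc _ _)
    · intro x hx
      exact ((hHD x hx).differentiableAt).continuousAt.continuousWithinAt
    · intro x hx
      rw [interior_Ioc] at hx
      exact ((hHD x ⟨hx.1, hx.2.le⟩).differentiableAt).differentiableWithinAt
    · intro x hx
      rw [interior_Ioc] at hx
      have hx' : x ∈ Set.Ioc (0:ℝ) 1 := ⟨hx.1, hx.2.le⟩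
      rw [(hHD x hx').deriv]
      exact hDnonpos x hx'
  · intro x hx
    rw [(hHD x hx).deriv]
    exact ⟨rfl, hDnonpos x hx⟩
end

section
/- The function H₂(β) = 4(tan²(π/(2(β+1))) − 1/sin²(βπ/2)) is non-increasing on (0,1] and H₂(1) = 0; hence H₂(β) ≥ 0 for all β ∈ (0,1]. -/
open Real Set

private noncomputable def H3aux (x : ℝ) : ℝ := x^2 * Real.cos (x*π/2) / (Real.sin (x*π/2))^3

private lemma spos_aux {x : ℝ} (h0 : 0 < x) (h1 : x ≤ 1) : 0 < Real.sin (x*π/2) := by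
  apply Real.sin_pos_of_pos_of_lt_pi
  · positivity
  · nlinarith [Real.pi_pos]

private lemma key_ineq_aux {t : ℝ} (h0 : 0 < t) (h1 : t ≤ π) :
    2 * Real.sin t ≤ t * (2 + Real.cos t) := by
  rcases le_or_gt t (π/2) with h | h
  · have hs : Real.sin t ≤ t := Real.sin_le h0.le
    have hc : 0 ≤ Real.cos t := Real.cos_nonneg_of_mem_Icc ⟨by linarith [Real.pi_pos], h⟩
    nlinarith
  rcases le_or_gt t (2*π/3) with h2 | h2
  · have hs : Real.sin t ≤ 1 := Real.sin_le_one t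
    have hc : Real.cos (2*π/3) ≤ Real.cos t :=
      Real.cos_le_cos_of_nonneg_of_le_pi h0.le (by linarith [Real.pi_pos]) h2
    have hc23 : Real.cos (2*π/3) = -(1/2) := by
      have h3 : (2*π/3 : ℝ) = π - π/3 := by ring
      rw [h3, Real.cos_pi_sub, Real.cos_pi_div_three]
    have hπ : 3 < π := Real.pi_gt_three
    nlinarith
  · have hs : Real.sin t ≤ π - t := by
      rw [← Real.sin_pi_sub]
      exact Real.sin_le (by linarith)
    have hc : -1 ≤ Real.cos t := Real.neg_one_le_cos t
    nlinarith

private lemma hlin_aux (x : ℝ) : HasDerivAt (fun y : ℝ => y*π/2) (π/2) x := by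
  simpa using ((hasDerivAt_id x).mul_const π).div_const 2

private lemma hsin_aux (x : ℝ) :
    HasDerivAt (fun y : ℝ => Real.sin (y*π/2)) (Real.cos (x*π/2) * (π/2)) x := by
  simpa [Function.comp_def] using (Real.hasDerivAt_sin (x*π/2)).comp x (hlin_aux x)

private lemma hcos_aux (x : ℝ) :
    HasDerivAt (fun y : ℝ => Real.cos (y*π/2)) (-Real.sin (x*π/2) * (π/2)) x := by
  simpa [Function.comp_def] using (Real.hasDerivAt_cos (x*π/2)).comp x (hlin_aux x)

private lemma H3aux_hasDerivAt {x : ℝ} (hs : Real.sin (x*π/2) ≠ 0) :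
    HasDerivAt H3aux
      (((2*x*Real.cos (x*π/2) + x^2 * (-Real.sin (x*π/2) * (π/2))) * (Real.sin (x*π/2))^3
        - x^2*Real.cos (x*π/2) * (3*(Real.sin (x*π/2))^2 * (Real.cos (x*π/2) * (π/2))))
        / ((Real.sin (x*π/2))^3)^2) x := by
  have hN : HasDerivAt (fun y : ℝ => y^2 * Real.cos (y*π/2))
      (2*x*Real.cos (x*π/2) + x^2 * (-Real.sin (x*π/2) * (π/2))) x := by
    refine ((hasDerivAt_pow 2 x).mul (hcos_aux x)).congr_deriv ?_
    simp
  have hD : HasDerivAt (fun y : ℝ => (Real.sin (y*π/2))^3)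
      (3*(Real.sin (x*π/2))^2 * (Real.cos (x*π/2) * (π/2))) x := by
    refine ((hsin_aux x).pow 3).congr_deriv ?_
    simp
  exact hN.div hD (pow_ne_zero 3 hs)

private lemma H3aux_anti : AntitoneOn H3aux (Ioc (0:ℝ) 1) := by
  apply antitoneOn_of_deriv_nonpos (convex_Ioc 0 1)
  · intro x hx
    exact (H3aux_hasDerivAt (ne_of_gt (spos_aux hx.1 hx.2))).continuousAt.continuousWithinAt
  · rw [interior_Ioc]
    intro x hx
    exact
      (H3aux_hasDerivAt (ne_of_gt (spos_aux hx.1 hx.2.le))).differentiableAt.differentiableWithinAt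
  · rw [interior_Ioc]
    intro x hx
    obtain ⟨hx0, hx1⟩ := hx
    have hsp := spos_aux hx0 hx1.le
    rw [(H3aux_hasDerivAt (ne_of_gt hsp)).deriv]
    set s := Real.sin (x*π/2) with hs_def
    set c := Real.cos (x*π/2) with hc_def
    have hkey := key_ineq_aux (t := π*x) (by positivity) (by nlinarith [Real.pi_pos])
    have hsin2 : Real.sin (π*x) = 2*s*c := by
      rw [show π*x = 2*(x*π/2) by ring, Real.sin_two_mul]
    have hcos2 : Real.cos (π*x) = 2*c^2-1 := by
      rw [show π*x = 2*(x*π/2) by ring, Real.cos_two_mul]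
    rw [hsin2, hcos2] at hkey
    have hpyth : s^2 + c^2 = 1 := Real.sin_sq_add_cos_sq (x*π/2)
    have hmul := mul_le_mul_of_nonneg_left hkey (show (0:ℝ) ≤ x*s^2 by positivity)
    apply div_nonpos_of_nonpos_of_nonneg
    · have h2 : π*x^2*s^2*(s^2+c^2) = π*x^2*s^2 := by rw [hpyth]; ring
      nlinarith [hmul, h2]
    · positivity

private lemma H2_hasDerivAt_aux {β : ℝ} (h0 : 0 < β) (h1 : β ≤ 1) :
    HasDerivAt (fun y : ℝ => 4 * ((Real.tan (π/(2*(y+1))))^2 - 1/(Real.sin (y*π/2))^2))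
      (4*π*(Real.cos (β*π/2)/(Real.sin (β*π/2))^3
        - Real.sin (π/(2*(β+1)))/((β+1)^2 * (Real.cos (π/(2*(β+1))))^3))) β := by
  have hβ1 : (0:ℝ) < β + 1 := by linarith
  have hfpos : 0 < π/(2*(β+1)) := by positivity
  have hflt : π/(2*(β+1)) < π/2 :=
    div_lt_div_of_pos_left Real.pi_pos two_pos (by linarith)
  have hcosf : 0 < Real.cos (π/(2*(β+1))) :=
    Real.cos_pos_of_mem_Ioo ⟨by linarith [Real.pi_pos], hflt⟩
  have hsβ : 0 < Real.sin (β*π/2) := spos_aux h0 h1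
  have hden : HasDerivAt (fun y : ℝ => 2*(y+1)) 2 β := by
    simpa using ((hasDerivAt_id β).add_const 1).const_mul 2
  have hf : HasDerivAt (fun y : ℝ => π/(2*(y+1)))
      ((0*(2*(β+1)) - π*2)/(2*(β+1))^2) β :=
    (hasDerivAt_const β π).div hden (by positivity)
  have htan : HasDerivAt (fun y : ℝ => Real.tan (π/(2*(y+1))))
      (1/(Real.cos (π/(2*(β+1))))^2 * ((0*(2*(β+1)) - π*2)/(2*(β+1))^2)) β := by
    simpa [Function.comp_def] using (Real.hasDerivAt_tan (ne_of_gt hcosf)).comp β hf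
  have htan2 := htan.pow 2
  have hsin2 := (hsin_aux β).pow 2
  have hinv : HasDerivAt (fun y : ℝ => 1/(Real.sin (y*π/2))^2)
      ((0*((Real.sin (β*π/2))^2)
        - 1*((2:ℕ)*(Real.sin (β*π/2))^(2-1)*(Real.cos (β*π/2)*(π/2))))
        /((Real.sin (β*π/2))^2)^2) β :=
    (hasDerivAt_const β 1).div hsin2 (by positivity)
  have hfinal := (htan2.sub hinv).const_mul 4
  refine hfinal.congr_deriv ?_
  rw [Real.tan_eq_sin_div_cos]
  have hcne : Real.cos (π/(2*(β+1))) ≠ 0 := hcosf.ne'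
  have hsne : Real.sin (β*π/2) ≠ 0 := hsβ.ne'
  have hbne : β + 1 ≠ 0 := hβ1.ne'
  simp only [Nat.cast_ofNat, show (2:ℕ)-1 = 1 from rfl, pow_one]
  generalize Real.cos (π/(2*(β+1))) = C at hcne ⊢
  generalize Real.sin (β*π/2) = S at hsne ⊢
  generalize Real.sin (π/(2*(β+1))) = T
  generalize Real.cos (β*π/2) = D
  field_simp
  ring

private lemma H2_deriv_nonpos_aux {β : ℝ} (h0 : 0 < β) (h1 : β < 1) :
    4*π*(Real.cos (β*π/2)/(Real.sin (β*π/2))^3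
      - Real.sin (π/(2*(β+1)))/((β+1)^2 * (Real.cos (π/(2*(β+1))))^3)) ≤ 0 := by
  have hβ1 : (0:ℝ) < β + 1 := by linarith
  set u := β/(β+1) with hu_def
  have hu0 : 0 < u := by positivity
  have huβ : u ≤ β := by
    rw [hu_def, div_le_iff₀ hβ1]
    nlinarith
  have hu1 : u ≤ 1 := le_trans huβ h1.le
  have huid : u*(β+1) = β := by
    rw [hu_def]; field_simp
  have hfu : π/(2*(β+1)) = π/2 - u*π/2 := by
    rw [hu_def]; field_simp; ring
  have hsinf : Real.sin (π/(2*(β+1))) = Real.cos (u*π/2) := by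
    rw [hfu, Real.sin_pi_div_two_sub]
  have hcosf : Real.cos (π/(2*(β+1))) = Real.sin (u*π/2) := by
    rw [hfu, Real.cos_pi_div_two_sub]
  have hsβ : 0 < Real.sin (β*π/2) := spos_aux h0 h1.le
  have hsu : 0 < Real.sin (u*π/2) := spos_aux hu0 hu1
  have hH3le : H3aux β ≤ H3aux u := H3aux_anti ⟨hu0, hu1⟩ ⟨h0, h1.le⟩ huβ
  rw [H3aux, H3aux, div_le_div_iff₀ (pow_pos hsβ 3) (pow_pos hsu 3)] at hH3le
  rw [hsinf, hcosf]
  have hAB : Real.cos (β*π/2)/(Real.sin (β*π/2))^3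
      ≤ Real.cos (u*π/2)/((β+1)^2 * (Real.sin (u*π/2))^3) := by
    rw [div_le_div_iff₀ (pow_pos hsβ 3) (by positivity)]
    have huid2 : β^2 = u^2*(β+1)^2 := by rw [hu_def]; field_simp
    have key := mul_le_mul_of_nonneg_left hH3le (sq_nonneg (β+1))
    have hmain : β^2*(Real.cos (β*π/2)*((β+1)^2*(Real.sin (u*π/2))^3))
        ≤ β^2*(Real.cos (u*π/2)*(Real.sin (β*π/2))^3) := by
      calc β^2*(Real.cos (β*π/2)*((β+1)^2*(Real.sin (u*π/2))^3))
          = (β+1)^2*(β^2 * Real.cos (β*π/2) * (Real.sin (u*π/2))^3) := by ring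
        _ ≤ (β+1)^2*(u^2 * Real.cos (u*π/2) * (Real.sin (β*π/2))^3) := key
        _ = (u^2*(β+1)^2)*(Real.cos (u*π/2)*(Real.sin (β*π/2))^3) := by ring
        _ = β^2*(Real.cos (u*π/2)*(Real.sin (β*π/2))^3) := by rw [← huid2]
    exact le_of_mul_le_mul_left hmain (by positivity)
  nlinarith [Real.pi_pos, hAB]

/-- H₂ is non-increasing on (0,1], H₂(1) = 0, hence H₂ ≥ 0 on (0,1]. -/
theorem stmt9 (H₂ : ℝ → ℝ)
    (hH₂ : ∀ β, H₂ β =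
      4 * ((Real.tan (Real.pi/(2*(β+1))))^2 - 1/(Real.sin (β*Real.pi/2))^2)) :
    AntitoneOn H₂ (Set.Ioc (0:ℝ) 1) ∧ H₂ 1 = 0 ∧ ∀ β ∈ Set.Ioc (0:ℝ) 1, 0 ≤ H₂ β := by
  have hfun : H₂ = fun β : ℝ =>
      4 * ((Real.tan (π/(2*(β+1))))^2 - 1/(Real.sin (β*π/2))^2) := funext hH₂
  subst hfun
  have hanti : AntitoneOn
      (fun β : ℝ => 4 * ((Real.tan (π/(2*(β+1))))^2 - 1/(Real.sin (β*π/2))^2))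
      (Set.Ioc (0:ℝ) 1) := by
    apply antitoneOn_of_deriv_nonpos (convex_Ioc 0 1)
    · intro x hx
      exact (H2_hasDerivAt_aux hx.1 hx.2).continuousAt.continuousWithinAt
    · rw [interior_Ioc]
      intro x hx
      exact (H2_hasDerivAt_aux hx.1 hx.2.le).differentiableAt.differentiableWithinAt
    · rw [interior_Ioc]
      intro x hx
      rw [(H2_hasDerivAt_aux hx.1 hx.2.le).deriv]
      exact H2_deriv_nonpos_aux hx.1 hx.2
  have h1 : (fun β : ℝ => 4 * ((Real.tan (π/(2*(β+1))))^2 - 1/(Real.sin (β*π/2))^2)) 1 = 0 := by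
    simp only
    rw [show π/(2*((1:ℝ)+1)) = π/4 by norm_num, Real.tan_pi_div_four,
      show (1:ℝ)*π/2 = π/2 by ring, Real.sin_pi_div_two]
    norm_num
  refine ⟨hanti, h1, fun β hβ => ?_⟩
  have := hanti hβ ⟨one_pos, le_refl 1⟩ hβ.2
  rw [h1] at this
  exact this
end

section
/- For β ∈ (0,1], 2 tan(π/(2(β+1))) ≥ 2/sin(βπ/2), i.e. sin(βπ/2)·tan(π/(2(β+1))) ≥ 1. -/
open Real Set

private lemma aux_h8 (β p : ℝ) (h0 : 0 < β) (h1 : β ≤ 2/5) (h2 : 3.14 < p)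
    (h3 : p < 3.15) : β*p^2*(β+1)/16 + β*p^2/8 ≤ 1 := by
  have hp2 : p^2 < 9.9225 := by nlinarith
  have hββ : β*(β+1) ≤ 0.56 := by nlinarith
  nlinarith [hp2, hββ, mul_pos h0 h0, sq_nonneg p]

private lemma aux_h2 (β p : ℝ) (h0 : 2/5 < β) (h1 : β < 1) (h2 : 3.14 < p)
    (h3 : p < 3.15) : p*(1-β^2)/4 ≤ 1 - ((1-β)*p/2)^2/4 := by
  have hp2 : p^2 < 9.9225 := by nlinarith
  nlinarith [hp2, sq_nonneg (1-β), mul_nonneg (sub_nonneg.2 h1.le) (sub_nonneg.2 h1.le)]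

set_option maxHeartbeats 1600000 in
/-- sin(βπ/2)·tan(π/(2(β+1))) ≥ 1 for β ∈ (0,1]. -/
theorem stmt10 : ∀ β ∈ Set.Ioc (0:ℝ) 1,
    1 ≤ Real.sin (β*Real.pi/2) * Real.tan (Real.pi/(2*(β+1))) := by
  rintro β ⟨hβ0, hβ1⟩
  have hπ := Real.pi_pos
  have hπlt : Real.pi < 3.15 := by linarith [Real.pi_lt_d2]
  have hπgt : 3.14 < Real.pi := by linarith [Real.pi_gt_d2]
  by_cases hβeq : β = 1
  · subst hβeq
    norm_num [Real.tan_pi_div_four, show (2:ℝ)*(1+1) = 4 by ring]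
  have hβlt : β < 1 := lt_of_le_of_ne hβ1 hβeq
  have hb1 : (0:ℝ) < β + 1 := by linarith
  set a := β * Real.pi / 2 with ha_def
  set φ := β * Real.pi / (2*(β+1)) with hφ_def
  clear_value a φ
  have ha0 : 0 < a := by rw [ha_def]; positivity
  have hkey : Real.pi / (2*(β+1)) = Real.pi/2 - φ := by
    rw [hφ_def]; field_simp; ring
  have hφ0 : 0 < φ := by rw [hφ_def]; positivity
  have hφle : φ ≤ Real.pi / 4 := by
    rw [hφ_def, div_le_div_iff₀ (by positivity) (by norm_num)]
    nlinarith
  have hφlt2 : φ < Real.pi / 2 := by linarith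
  have hcosφ : 0 < Real.cos φ := Real.cos_pos_of_mem_Ioo ⟨by linarith, hφlt2⟩
  have htanφ : 0 < Real.tan φ := Real.tan_pos_of_pos_of_lt_pi_div_two hφ0 hφlt2
  rw [hkey, Real.tan_pi_div_two_sub]
  rw [← div_eq_mul_inv, le_div_iff₀ htanφ, one_mul, Real.tan_eq_sin_div_cos,
    div_le_iff₀ hcosφ]
  -- goal: sin φ ≤ sin a * cos φ
  rcases le_or_gt β (2/5) with hsml | hlrg
  · -- small β case
    have hφa : φ * (β+1) = a := by rw [hφ_def, ha_def]; field_simp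
    have ha1 : a ≤ 1 := by rw [ha_def]; nlinarith
    have hsinφ : Real.sin φ ≤ φ := (Real.sin_lt hφ0).le
    have hsina : a - a^3/4 < Real.sin a := by linarith [Real.sin_gt_sub_cube ha0, pow_pos ha0 3]
    have hcosφlb : 1 - φ^2/2 ≤ Real.cos φ := Real.one_sub_sq_div_two_le_cos
    have hA0 : 0 < a - a^3/4 := by nlinarith [mul_pos ha0 ha0]
    have hC0 : 0 < 1 - φ^2/2 := by nlinarith [mul_pos hφ0 hφ0]
    have hsina0 : 0 ≤ Real.sin a := le_of_lt (lt_trans hA0 hsina)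
    have hsq : φ^2*(β+1)^2 = (β*Real.pi/2)^2 := by
      have h := hφa
      rw [ha_def] at h
      linear_combination (φ*(β+1) + β*Real.pi/2) * h
    have h6 : φ^2*(β+1) ≤ φ^2*(β+1)^2 := by nlinarith [sq_nonneg φ, hβ0]
    have h7 : φ^2*(β+1)^3 = (β*Real.pi/2)^2*(β+1) := by linear_combination (β+1) * hsq
    have h9 : β*(β*Real.pi^2*(β+1)/16 + β*Real.pi^2/8) ≤ β*1 :=
      mul_le_mul_of_nonneg_left (aux_h8 β Real.pi hβ0 hsml hπgt hπlt) hβ0.le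
    have hstep : φ^2*(β+1)^3/4 + φ^2*(β+1)/2 ≤ β := by linarith [h6, h7, hsq, h9]
    have hkey2 : φ*(φ^2*(β+1)^3/4 + φ^2*(β+1)/2) ≤ φ*β :=
      mul_le_mul_of_nonneg_left hstep hφ0.le
    have hq5 : 0 ≤ φ^5*(β+1)^3 := by positivity
    have key : φ ≤ (a - a^3/4) * (1 - φ^2/2) := by
      rw [← hφa]
      linarith [hkey2, hq5]
    exact le_trans hsinφ (le_trans key (mul_le_mul hsina.le hcosφlb hC0.le hsina0))
  · -- large β case
    set δ := (1-β)*Real.pi/2 with hδ_def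
    set η := δ/(2*(β+1)) with hη_def
    clear_value δ η
    have hδ0 : 0 < δ := by
      have h1 := mul_pos (show (0:ℝ) < 1-β by linarith) hπ
      rw [hδ_def]; linarith
    have hδ1 : δ < 1 := by
      have h1 : (1-β)*Real.pi ≤ (3/5)*Real.pi :=
        mul_le_mul_of_nonneg_right (by linarith) hπ.le
      rw [hδ_def]; linarith
    have hη0 : 0 < η := by
      rw [hη_def]; exact div_pos hδ0 (by linarith)
    have hηlt : η < Real.pi/2 := by
      have h1 : (1:ℝ) < Real.pi/2*(2*(β+1)) := by
        have h2 : (7/5)*Real.pi ≤ (β+1)*Real.pi :=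
          mul_le_mul_of_nonneg_right (by linarith) hπ.le
        linarith
      rw [hη_def, div_lt_iff₀ (by linarith : (0:ℝ) < 2*(β+1))]
      exact hδ1.trans h1
    have hcosη : 0 < Real.cos η := Real.cos_pos_of_mem_Ioo ⟨by linarith, hηlt⟩
    have hsinηgt : η * Real.cos η < Real.sin η := by
      have h := Real.lt_tan hη0 hηlt
      rw [Real.tan_eq_sin_div_cos, lt_div_iff₀ hcosη] at h
      exact h
    have hsina_eq : Real.sin a = Real.cos δ := by
      rw [ha_def, hδ_def, show β * Real.pi / 2 = Real.pi/2 - (1-β)*Real.pi/2 by ring,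
        Real.sin_pi_div_two_sub]
    have hφ_eq : φ = Real.pi/4 - η := by
      rw [hφ_def, hη_def, hδ_def]; field_simp; ring
    set s2 := Real.sin (δ/2) with hs2_def
    set c2 := Real.cos (δ/2) with hc2_def
    clear_value s2 c2
    have hs2 : s2 ≤ δ/2 := by
      rw [hs2_def]; exact (Real.sin_lt (by linarith : (0:ℝ) < δ/2)).le
    have hs20 : 0 ≤ s2 := by
      rw [hs2_def]
      exact Real.sin_nonneg_of_nonneg_of_le_pi (by linarith) (by linarith)
    have hc2 : 1 - (δ/2)^2/2 ≤ c2 := by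
      rw [hc2_def]; exact Real.one_sub_sq_div_two_le_cos
    have hc2le : c2 ≤ 1 := by rw [hc2_def]; exact Real.cos_le_one _
    have hlb0 : 0 < 1 - (δ/2)^2/2 := by nlinarith [hδ0, hδ1]
    have hq : Real.pi*(1-β^2)/4 ≤ (1 - (δ/2)^2/2)^2 := by
      have h1 : 1 - δ^2/4 ≤ (1 - (δ/2)^2/2)^2 := by nlinarith [sq_nonneg (δ^2)]
      have h2 : Real.pi*(1-β^2)/4 ≤ 1 - δ^2/4 := by
        have := aux_h2 β Real.pi hlrg hβlt hπgt hπlt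
        rw [hδ_def]; linarith
      linarith
    have hEq : η*(Real.pi*(1-β^2)/4) = δ^2/4 := by
      rw [hη_def, hδ_def]; field_simp; ring
    have hpoly : δ^2/4 ≤ η * (1 - (δ/2)^2/2)^2 := by
      have h := mul_le_mul_of_nonneg_left hq hη0.le
      rw [hEq] at h
      exact h
    have e1 : Real.cos η * s2^2 ≤ Real.cos η * (δ^2/4) :=
      mul_le_mul_of_nonneg_left (by nlinarith [hs2, hs20]) hcosη.le
    have e2 : Real.cos η * (δ^2/4) ≤ Real.cos η * (η*(1-(δ/2)^2/2)^2) :=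
      mul_le_mul_of_nonneg_left hpoly hcosη.le
    have e3 : (1-(δ/2)^2/2)^2 ≤ c2^2 := by nlinarith [hc2, hlb0]
    have e4 : Real.cos η*(η*(1-(δ/2)^2/2)^2) ≤ Real.cos η*(η*c2^2) :=
      mul_le_mul_of_nonneg_left (mul_le_mul_of_nonneg_left e3 hη0.le) hcosη.le
    have e6 : (η*Real.cos η)*c2^2 ≤ Real.sin η * c2^2 :=
      mul_le_mul_of_nonneg_right hsinηgt.le (sq_nonneg c2)
    have echain : Real.cos η * s2^2 ≤ Real.sin η * c2^2 := by linarith [e1, e2, e4, e6]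
    have hcosδ : Real.cos δ = 2*c2^2 - 1 := by
      have h := Real.cos_two_mul (δ/2)
      rw [show 2*(δ/2) = δ by ring] at h
      rw [hc2_def]; exact h
    have hpyth : s2^2 + c2^2 = 1 := by
      rw [hs2_def, hc2_def]; exact Real.sin_sq_add_cos_sq _
    rw [hsina_eq, hφ_eq, Real.sin_sub, Real.cos_sub, Real.sin_pi_div_four,
      Real.cos_pi_div_four, hcosδ]
    have p1 : (s2^2+c2^2)*Real.cos η = Real.cos η := by rw [hpyth, one_mul]
    have p2 : (s2^2+c2^2)*Real.sin η = Real.sin η := by rw [hpyth, one_mul]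
    have inner : 0 ≤ (2*c2^2 - 1)*(Real.cos η + Real.sin η) - (Real.cos η - Real.sin η) := by
      linarith [echain, p1, p2]
    linarith [mul_nonneg (Real.sqrt_nonneg 2) inner]
end

section
/- For ρ ∈ (0,π), ∫₀^ρ sin²(t/2)/(cos(t/2)·√(2(cos t − cos ρ))) dt = (π/2)(sec(ρ/2) − 1). -/
set_option maxHeartbeats 1000000

open Real MeasureTheory intervalIntegral Set

/-- the explicit value of the improper integral. -/
theorem stmt12 (ρ : ℝ) (hρ : ρ ∈ Set.Ioo (0:ℝ) Real.pi) :
    (∫ t in (0:ℝ)..ρ,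
        (Real.sin (t/2))^2 / (Real.cos (t/2) * Real.sqrt (2*(Real.cos t - Real.cos ρ))))
      = Real.pi/2 * (1/Real.cos (ρ/2) - 1) := by
  obtain ⟨hρ0, hρπ⟩ := hρ
  set k := Real.sin (ρ/2) with hkdef
  set K := Real.cos (ρ/2) with hKdef
  have hρ2 : 0 < ρ/2 := by linarith
  have hρ2' : ρ/2 < Real.pi/2 := by linarith
  have hk : 0 < k := Real.sin_pos_of_pos_of_lt_pi hρ2 (by linarith [Real.pi_pos])
  have hK : 0 < K := Real.cos_pos_of_mem_Ioo ⟨by linarith, hρ2'⟩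
  have hkK : k^2 + K^2 = 1 := by
    rw [hkdef, hKdef]; exact Real.sin_sq_add_cos_sq _
  set f : ℝ → ℝ := fun t =>
    (Real.sin (t/2))^2 / (Real.cos (t/2) * Real.sqrt (2*(Real.cos t - Real.cos ρ))) with hf
  set G : ℝ → ℝ := fun t =>
    K⁻¹ * Real.arcsin (K * Real.sin (t/2) / (k * Real.cos (t/2)))
      - Real.arcsin (Real.sin (t/2) / k) with hGdef
  -- continuity of G on [0, ρ]
  have hcos_ne : ∀ t ∈ Set.Icc (0:ℝ) ρ, Real.cos (t/2) ≠ 0 := by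
    intro t ht
    have : 0 < Real.cos (t/2) := by
      apply Real.cos_pos_of_mem_Ioo
      constructor
      · have := ht.1; linarith [Real.pi_pos]
      · have := ht.2; linarith
    exact this.ne'
  have hcont : ContinuousOn G (Set.Icc 0 ρ) := by
    apply ContinuousOn.sub
    · apply ContinuousOn.mul continuousOn_const
      apply Real.continuous_arcsin.comp_continuousOn
      apply ContinuousOn.div
      · fun_prop
      · fun_prop
      · intro t ht
        exact mul_ne_zero hk.ne' (hcos_ne t ht)
    · apply Real.continuous_arcsin.comp_continuousOn
      fun_prop
  -- derivative of G on (0, ρ)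
  have hderiv : ∀ t ∈ Set.Ioo (0:ℝ) ρ, HasDerivAt G (f t) t := by
    intro t ht
    obtain ⟨ht0, htρ⟩ := ht
    set s := Real.sin (t/2) with hsdef
    set c := Real.cos (t/2) with hcdef
    have hsc : s^2 + c^2 = 1 := by rw [hsdef, hcdef]; exact Real.sin_sq_add_cos_sq _
    have hs : 0 < s := Real.sin_pos_of_pos_of_lt_pi (by linarith) (by linarith [Real.pi_pos])
    have hc : 0 < c := Real.cos_pos_of_mem_Ioo ⟨by linarith [Real.pi_pos], by linarith⟩
    have hsk : s < k := by
      rw [hsdef, hkdef]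
      apply Real.strictMonoOn_sin ⟨by linarith, by linarith⟩ ⟨by linarith, by linarith⟩
      linarith
    set q := Real.sqrt (k^2 - s^2) with hqdef
    have hq2 : q^2 = k^2 - s^2 := Real.sq_sqrt (by nlinarith)
    have hq : 0 < q := Real.sqrt_pos.2 (by nlinarith)
    -- derivatives of sin(t/2), cos(t/2)
    have hd2 : HasDerivAt (fun t : ℝ => t/2) (1/2) t := (hasDerivAt_id t).div_const 2
    have hds : HasDerivAt (fun t : ℝ => Real.sin (t/2)) (c * (1/2)) t :=
      by have h := (Real.hasDerivAt_sin (t/2)).comp t hd2; exact h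
    have hdc : HasDerivAt (fun t : ℝ => Real.cos (t/2)) (-s * (1/2)) t :=
      by have h := (Real.hasDerivAt_cos (t/2)).comp t hd2; exact h
    have hcost : Real.cos t = 1 - 2 * s^2 := by
      have h2t := Real.cos_two_mul (t/2)
      rw [show 2 * (t/2) = t by ring] at h2t
      rw [hsdef]; nlinarith [hsc]
    have hcosρ : Real.cos ρ = 1 - 2 * k^2 := by
      have h2t := Real.cos_two_mul (ρ/2)
      rw [show 2 * (ρ/2) = ρ by ring] at h2t
      rw [hkdef]; nlinarith [hkK]
    have hsq : Real.sqrt (2 * (Real.cos t - Real.cos ρ)) = 2 * q := by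
      rw [hcost, hcosρ, show 2 * ((1 - 2*s^2) - (1 - 2*k^2)) = (2*q)^2 by nlinarith [hq2],
        Real.sqrt_sq (by positivity)]
    clear_value s c q
    -- first arcsin term
    set u₁ := K * s / (k * c) with hu1def
    have hpt1 : u₁ = K * Real.sin (t/2) / (k * Real.cos (t/2)) := by rw [hu1def, hsdef, hcdef]
    have hden1 : k * Real.cos (t/2) ≠ 0 := by rw [← hcdef]; positivity
    have hu1sq : 1 - u₁^2 = q^2 / (k*c)^2 := by
      rw [hu1def, hq2]
      field_simp
      nlinarith [hsc, hkK]
    have hu1sq_pos : 0 < 1 - u₁^2 := by rw [hu1sq]; positivity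
    have hu1_ne1 : u₁ ≠ 1 := by intro h; rw [h] at hu1sq_pos; norm_num at hu1sq_pos
    have hu1_ne1' : u₁ ≠ -1 := by intro h; rw [h] at hu1sq_pos; norm_num at hu1sq_pos
    have hsqrt1 : Real.sqrt (1 - u₁^2) = q / (k*c) := by
      rw [hu1sq, show q^2/(k*c)^2 = (q/(k*c))^2 by ring, Real.sqrt_sq (by positivity)]
    have hdu1 : HasDerivAt (fun t : ℝ => K * Real.sin (t/2) / (k * Real.cos (t/2)))
        (((K * (c * (1/2))) * (k * Real.cos (t/2)) - (K * Real.sin (t/2)) * (k * (-s * (1/2))))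
          / (k * Real.cos (t/2))^2) t :=
      (hds.const_mul K).div (hdc.const_mul k) hden1
    have harc1 : HasDerivAt Real.arcsin (1 / Real.sqrt (1 - u₁^2))
        (K * Real.sin (t/2) / (k * Real.cos (t/2))) :=
      hpt1 ▸ (Real.hasDerivAt_arcsin hu1_ne1' hu1_ne1)
    have h1 : HasDerivAt (fun t : ℝ => Real.arcsin (K * Real.sin (t/2) / (k * Real.cos (t/2))))
        ((1 / Real.sqrt (1 - u₁^2)) *
          (((K * (c * (1/2))) * (k * Real.cos (t/2)) - (K * Real.sin (t/2)) * (k * (-s * (1/2))))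
            / (k * Real.cos (t/2))^2)) t :=
      by have h := harc1.comp t hdu1; exact h
    -- second arcsin term
    set u₂ := s / k with hu2def
    have hpt2 : u₂ = Real.sin (t/2) / k := by rw [hu2def, hsdef]
    have hu2sq : 1 - u₂^2 = q^2 / k^2 := by
      rw [hu2def, hq2]; field_simp
    have hu2sq_pos : 0 < 1 - u₂^2 := by rw [hu2sq]; positivity
    have hu2_ne1 : u₂ ≠ 1 := by intro h; rw [h] at hu2sq_pos; norm_num at hu2sq_pos
    have hu2_ne1' : u₂ ≠ -1 := by intro h; rw [h] at hu2sq_pos; norm_num at hu2sq_pos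
    have hsqrt2 : Real.sqrt (1 - u₂^2) = q / k := by
      rw [hu2sq, show q^2/k^2 = (q/k)^2 by ring, Real.sqrt_sq (by positivity)]
    have hdu2 : HasDerivAt (fun t : ℝ => Real.sin (t/2) / k) (c * (1/2) / k) t := hds.div_const k
    have harc2 : HasDerivAt Real.arcsin (1 / Real.sqrt (1 - u₂^2)) (Real.sin (t/2) / k) :=
      hpt2 ▸ (Real.hasDerivAt_arcsin hu2_ne1' hu2_ne1)
    have h2 : HasDerivAt (fun t : ℝ => Real.arcsin (Real.sin (t/2) / k))
        ((1 / Real.sqrt (1 - u₂^2)) * (c * (1/2) / k)) t :=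
      by have h := harc2.comp t hdu2; exact h
    -- combine
    have hG' : HasDerivAt G
        (K⁻¹ * ((1 / Real.sqrt (1 - u₁^2)) *
          (((K * (c * (1/2))) * (k * Real.cos (t/2)) - (K * Real.sin (t/2)) * (k * (-s * (1/2))))
            / (k * Real.cos (t/2))^2))
          - (1 / Real.sqrt (1 - u₂^2)) * (c * (1/2) / k)) t :=
      (h1.const_mul K⁻¹).sub h2
    convert hG' using 1
    rw [hf]
    simp only
    rw [← hsdef, ← hcdef, hsq, hsqrt1, hsqrt2]
    field_simp
    ring_nf
  -- integrability
  have hnonneg : ∀ t ∈ Set.Ioo (0:ℝ) ρ, 0 ≤ f t := by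
    intro t ht
    apply div_nonneg (sq_nonneg _)
    apply mul_nonneg _ (Real.sqrt_nonneg _)
    have : 0 < Real.cos (t/2) :=
      Real.cos_pos_of_mem_Ioo ⟨by linarith [Real.pi_pos, ht.1], by linarith [ht.2]⟩
    exact this.le
  have hint : IntervalIntegrable f volume 0 ρ := by
    apply intervalIntegrable_deriv_of_nonneg (g := G)
    · rwa [Set.uIcc_of_le hρ0.le]
    · rwa [min_eq_left hρ0.le, max_eq_right hρ0.le]
    · rwa [min_eq_left hρ0.le, max_eq_right hρ0.le]
  rw [show (∫ t in (0:ℝ)..ρ,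
        (Real.sin (t/2))^2 / (Real.cos (t/2) * Real.sqrt (2*(Real.cos t - Real.cos ρ))))
      = ∫ t in (0:ℝ)..ρ, f t from rfl,
    integral_eq_sub_of_hasDerivAt_of_le hρ0.le hcont hderiv hint]
  have hGρ : G ρ = K⁻¹ * (Real.pi/2) - Real.pi/2 := by
    rw [hGdef]
    simp only
    rw [show K * Real.sin (ρ/2) / (k * Real.cos (ρ/2)) = 1 by
        rw [← hkdef, ← hKdef]; field_simp,
      show Real.sin (ρ/2) / k = 1 by rw [← hkdef]; field_simp,
      Real.arcsin_one]
  have hG0 : G 0 = 0 := by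
    rw [hGdef]
    norm_num
  rw [hGρ, hG0]
  field_simp
  ring
end
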